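/- Let G be as in the f_k < 1 construction: two cliques A, B of size q each, a perfect matching a_i–b_i, and the first n+1 vertices of each clique joined to every vertex of the other clique (q ≥ n + 2). Then for every set S of at most q + n vertices, G minus S is connected. -/

import Mathlib

open Classical SimpleGraph

/-- The `f_k < 1` construction: two cliques of size `q` (the two summands), the perfect
matching `a_i ~ b_i`, and each of the first `n + 1` vertices of either clique joined to
every vertex of the other clique. -/
def multiHubCliques (q n : ℕ) : SimpleGraph (Fin q ⊕ Fin q) where
  Adj x y := x ≠ y ∧
    match x, y with
    | .inl _, .inl _ => True
    | .inr _, .inr _ => True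
    | .inl i, .inr j => i = j ∨ (i : ℕ) ≤ n ∨ (j : ℕ) ≤ n
    | .inr i, .inl j => i = j ∨ (i : ℕ) ≤ n ∨ (j : ℕ) ≤ n
  symm := ⟨by
    rintro (i | i) (j | j) ⟨hne, h⟩ <;>
      exact ⟨hne.symm, by simp_all <;> tauto⟩⟩
  loopless := ⟨by rintro (i | i) ⟨hne, _⟩ <;> exact hne rfl⟩

lemma cross_exists (q n : ℕ) (hq : n + 2 ≤ q) (S : Finset (Fin q ⊕ Fin q))
    (hS : S.card ≤ q + n) (a b : Fin q) (ha : Sum.inl a ∉ S) (hb : Sum.inr b ∉ S) :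
    ∃ u v : Fin q, Sum.inl u ∉ S ∧ Sum.inr v ∉ S ∧
      (u = v ∨ (u : ℕ) ≤ n ∨ (v : ℕ) ≤ n) := by
  by_contra h
  push_neg at h
  set L := S.toLeft with hL
  set R := S.toRight with hR
  have hubL : ∀ i : Fin q, (i : ℕ) ≤ n → i ∈ L := by
    intro i hi
    by_contra hiL
    simp only [hL, Finset.mem_toLeft] at hiL
    exact absurd hi (not_le.2 (h i b hiL hb).2.1)
  have hubR : ∀ i : Fin q, (i : ℕ) ≤ n → i ∈ R := by
    intro i hi
    by_contra hiR
    simp only [hR, Finset.mem_toRight] at hiR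
    exact absurd hi (not_le.2 (h a i ha hiR).2.2)
  have hunion : L ∪ R = Finset.univ := by
    apply Finset.eq_univ_of_forall
    intro i
    by_contra hi
    simp only [Finset.mem_union, not_or, hL, hR, Finset.mem_toLeft,
      Finset.mem_toRight] at hi
    exact (h i i hi.1 hi.2).1 rfl
  have hinter : n + 1 ≤ (L ∩ R).card := by
    have hmap : ∀ i ∈ (Finset.univ : Finset (Fin (n + 1))),
        (⟨(i : ℕ), by have := i.2; omega⟩ : Fin q) ∈ L ∩ R := by
      intro i _
      refine Finset.mem_inter.2 ⟨hubL _ ?_, hubR _ ?_⟩ <;>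
        simpa using Nat.lt_succ_iff.1 i.2
    have hinj : ((Finset.univ : Finset (Fin (n + 1))) : Set (Fin (n + 1))).InjOn
        (fun i : Fin (n+1) => (⟨(i : ℕ), by have := i.2; omega⟩ : Fin q)) := by
      intro i _ j _ hij
      exact Fin.ext (by simpa using congrArg Fin.val hij)
    have := Finset.card_le_card_of_injOn _ hmap hinj
    simpa using this
  have hcard : L.card + R.card = S.card := Finset.card_toLeft_add_card_toRight (u := S)
  have := Finset.card_union_add_card_inter L R
  rw [hunion] at this
  simp only [Finset.card_univ, Fintype.card_fin] at this
  omega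

/-- In the `f_k < 1` construction on `N = 2q` vertices with `q ≥ n + 2`,
removing any set of at most `q + n = N/2 + n` vertices leaves a connected graph. -/
theorem stmt19 (q n : ℕ) (hq : n + 2 ≤ q) :
    ∀ S : Finset (Fin q ⊕ Fin q), S.card ≤ q + n →
      ((multiHubCliques q n).induce ((S : Set (Fin q ⊕ Fin q))ᶜ)).Connected := by
  intro S hS
  set G := multiHubCliques q n with hG
  set T := ((S : Set (Fin q ⊕ Fin q))ᶜ) with hT
  -- adjacency step
  have step : ∀ (x y : T), G.Adj x.1 y.1 → (G.induce T).Reachable x y := by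
    intro x y h
    exact (SimpleGraph.Adj.reachable (by exact h))
  -- same-side reachability (left)
  have reachL : ∀ (i j : Fin q) (hi : Sum.inl i ∈ T) (hj : Sum.inl j ∈ T),
      (G.induce T).Reachable ⟨_, hi⟩ ⟨_, hj⟩ := by
    intro i j hi hj
    rcases eq_or_ne i j with rfl | hij
    · rfl
    · exact step _ _ ⟨by simp [hij], trivial⟩
  have reachR : ∀ (i j : Fin q) (hi : Sum.inr i ∈ T) (hj : Sum.inr j ∈ T),
      (G.induce T).Reachable ⟨_, hi⟩ ⟨_, hj⟩ := by
    intro i j hi hj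
    rcases eq_or_ne i j with rfl | hij
    · rfl
    · exact step _ _ ⟨by simp [hij], trivial⟩
  have memT : ∀ x : Fin q ⊕ Fin q, x ∈ T ↔ x ∉ S := by
    intro x; simp [hT]
  -- cross reachability
  have reachX : ∀ (i j : Fin q) (hi : Sum.inl i ∈ T) (hj : Sum.inr j ∈ T),
      (G.induce T).Reachable ⟨_, hi⟩ ⟨_, hj⟩ := by
    intro i j hi hj
    obtain ⟨u, v, hu, hv, huv⟩ := cross_exists q n hq S hS i j
      ((memT _).1 hi) ((memT _).1 hj)
    have hu' : Sum.inl u ∈ T := (memT _).2 hu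
    have hv' : Sum.inr v ∈ T := (memT _).2 hv
    refine ((reachL i u hi hu').trans (step ⟨_, hu'⟩ ⟨_, hv'⟩ ?_)).trans
      (reachR v j hv' hj)
    exact ⟨by simp, huv⟩
  have hne : Nonempty T := by
    have : Sᶜ.Nonempty := by
      apply Finset.card_pos.1
      have := Finset.card_compl S
      have hcard : Fintype.card (Fin q ⊕ Fin q) = 2 * q := by simp; omega
      omega
    obtain ⟨x, hx⟩ := this
    exact ⟨⟨x, (memT x).2 (Finset.mem_compl.1 hx)⟩⟩
  refine ⟨?_⟩
  rintro ⟨(i | i), hi⟩ ⟨(j | j), hj⟩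
  · exact reachL i j hi hj
  · exact reachX i j hi hj
  · exact (reachX j i hj hi).symm
  · exact reachR i j hi hj
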